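/- Let Δ ⊂ ℝⁿ be the simplex with vertices v₀ = 0, v₁ = (v₁₁, 0, ..., 0), ..., vₙ = (vₙ₁, ..., vₙₙ), where vᵢⱼ > 0 whenever j ≤ i. Then there exist positive real numbers a₁, ..., aₙ such that for all x ∈ Δ, 0 ≤ aₙxₙ ≤ a_{n-1}x_{n-1} ≤ ... ≤ a₁x₁ ≤ 1. -/

import Mathlib

/-- For a lower-triangular simplex `Δ = conv{v₀,…,vₙ}` with
`vᵢⱼ > 0` for `j ≤ i` and `vᵢⱼ = 0` for `j > i`, there are positive reals
`a₁,…,aₙ` with `0 ≤ aₙxₙ ≤ ⋯ ≤ a₁x₁ ≤ 1` for all `x ∈ Δ`. -/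
theorem ordered_simplex_scaling {n : ℕ}
    (v : Fin (n + 1) → (Fin n → ℝ))
    (hzero : v 0 = 0)
    (hpos : ∀ (i : Fin (n + 1)) (j : Fin n), (j : ℕ) + 1 ≤ (i : ℕ) → 0 < v i j)
    (hupper : ∀ (i : Fin (n + 1)) (j : Fin n), (i : ℕ) < (j : ℕ) + 1 → v i j = 0) :
    ∃ a : Fin n → ℝ, (∀ j, 0 < a j) ∧
      ∀ x ∈ convexHull ℝ (Set.range v),
        (∀ j : Fin n, 0 ≤ a j * x j) ∧
        (∀ j k : Fin n, j ≤ k → a k * x k ≤ a j * x j) ∧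
        (∀ j : Fin n, a j * x j ≤ 1) := by
  classical
  cases n with
  | zero =>
    exact ⟨fun _ => 1, fun j => j.elim0, fun x _ =>
      ⟨fun j => j.elim0, fun j => j.elim0, fun j => j.elim0⟩⟩
  | succ m =>
    have vnn : ∀ (i : Fin (m + 2)) (j : Fin (m + 1)), 0 ≤ v i j := by
      intro i j
      rcases lt_or_ge (i : ℕ) ((j : ℕ) + 1) with h | h
      · rw [hupper i j h]
      · exact (hpos i j h).le
    have hne : (Finset.univ : Finset (Fin (m + 2))).Nonempty := Finset.univ_nonempty
    set M : ℝ := Finset.univ.sup' hne (fun i => v i 0) with hM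
    have hM0 : 0 ≤ M := le_trans (vnn 0 0) (Finset.le_sup' (f := fun i => v i 0) (Finset.mem_univ 0))
    set C : ℝ := 1 / (1 + M) with hC
    have hCpos : 0 < C := div_pos one_pos (by linarith)
    set F : Fin (m + 2) × Fin (m + 1) × Fin (m + 1) → ℝ := fun p =>
      if 0 < v p.1 p.2.1 ∧ 0 < v p.1 p.2.2 then v p.1 p.2.1 / v p.1 p.2.2 else 1 with hF
    have hne2 : (Finset.univ : Finset (Fin (m + 2) × Fin (m + 1) × Fin (m + 1))).Nonempty :=
      Finset.univ_nonempty
    set ε : ℝ := min 1 (Finset.univ.inf' hne2 F) with hε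
    have hεpos : 0 < ε := by
      refine lt_min one_pos ?_
      rw [Finset.lt_inf'_iff]
      intro p _
      by_cases h : 0 < v p.1 p.2.1 ∧ 0 < v p.1 p.2.2
      · simp only [hF, if_pos h]
        exact div_pos h.1 h.2
      · simp only [hF, if_neg h]
        exact one_pos
    set a : Fin (m + 1) → ℝ := fun j => C * ε ^ (j : ℕ) with ha
    have hapos : ∀ j, 0 < a j := fun j => mul_pos hCpos (pow_pos hεpos _)
    have hstep : ∀ (i : Fin (m + 2)) (j k : Fin (m + 1)), (k : ℕ) = (j : ℕ) + 1 →
        a k * v i k ≤ a j * v i j := by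
      intro i j k hk
      by_cases hik : (i : ℕ) < (k : ℕ) + 1
      · rw [hupper i k hik, mul_zero]
        exact mul_nonneg (hapos j).le (vnn i j)
      · push_neg at hik
        have hvk : 0 < v i k := hpos i k hik
        have hvj : 0 < v i j := hpos i j (by omega)
        have hεle : ε ≤ v i j / v i k := by
          refine le_trans (min_le_right _ _) ?_
          have h1 := Finset.inf'_le F (Finset.mem_univ (i, j, k))
          rw [hF] at h1
          simp only [if_pos (And.intro hvj hvk)] at h1
          exact h1
        have h2 : ε * v i k ≤ v i j := (le_div_iff₀ hvk).1 hεle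
        have hak : a k = a j * ε := by
          simp only [ha, hk, pow_succ]
          ring
        rw [hak]
        calc a j * ε * v i k = a j * (ε * v i k) := by ring
          _ ≤ a j * v i j := mul_le_mul_of_nonneg_left h2 (hapos j).le
    have hchain : ∀ (i : Fin (m + 2)) (j k : Fin (m + 1)), j ≤ k →
        a k * v i k ≤ a j * v i j := by
      intro i j k hjk
      have hjk' : (j : ℕ) ≤ (k : ℕ) := hjk
      obtain ⟨d, hd⟩ : ∃ d, (k : ℕ) = (j : ℕ) + d := ⟨(k : ℕ) - (j : ℕ), by omega⟩
      clear hjk hjk'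
      induction d generalizing k with
      | zero =>
        have : k = j := Fin.ext (by omega)
        rw [this]
      | succ d ih =>
        have hmlt : (j : ℕ) + d < m + 1 := by omega
        have h1 := hstep i ⟨(j : ℕ) + d, hmlt⟩ k (by simpa [Nat.add_assoc] using hd)
        have h2 := ih ⟨(j : ℕ) + d, hmlt⟩ rfl
        exact le_trans h1 h2
    have hone : ∀ (i : Fin (m + 2)) (j : Fin (m + 1)), a j * v i j ≤ 1 := by
      intro i j
      have h1 : a j * v i j ≤ a 0 * v i 0 := hchain i 0 j (Fin.zero_le j)
      have h2 : v i 0 ≤ M := Finset.le_sup' (f := fun i => v i 0) (Finset.mem_univ i)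
      have h3 : a 0 = C := by simp [ha]
      calc a j * v i j ≤ a 0 * v i 0 := h1
        _ = C * v i 0 := by rw [h3]
        _ ≤ C * M := mul_le_mul_of_nonneg_left h2 hCpos.le
        _ ≤ 1 := by
            rw [hC, div_mul_eq_mul_div, one_mul, div_le_one (by linarith)]
            linarith
    refine ⟨a, hapos, ?_⟩
    intro x hx
    set S : Set (Fin (m + 1) → ℝ) := {y | (∀ j, 0 ≤ a j * y j) ∧
      (∀ j k, j ≤ k → a k * y k ≤ a j * y j) ∧ (∀ j, a j * y j ≤ 1)} with hS
    have hconv : Convex ℝ S := by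
      intro p hp q hq s t hs ht hst
      obtain ⟨hp1, hp2, hp3⟩ := hp
      obtain ⟨hq1, hq2, hq3⟩ := hq
      refine ⟨?_, ?_, ?_⟩
      · intro j
        have e : (s • p + t • q) j = s * p j + t * q j := rfl
        rw [e]
        nlinarith [mul_nonneg hs (hp1 j), mul_nonneg ht (hq1 j)]
      · intro j k hjk
        have e1 : (s • p + t • q) j = s * p j + t * q j := rfl
        have e2 : (s • p + t • q) k = s * p k + t * q k := rfl
        rw [e1, e2]
        nlinarith [mul_le_mul_of_nonneg_left (hp2 j k hjk) hs,
          mul_le_mul_of_nonneg_left (hq2 j k hjk) ht]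
      · intro j
        have e : (s • p + t • q) j = s * p j + t * q j := rfl
        rw [e]
        nlinarith [mul_le_mul_of_nonneg_left (hp3 j) hs,
          mul_le_mul_of_nonneg_left (hq3 j) ht]
    have hsub : Set.range v ⊆ S := by
      rintro _ ⟨i, rfl⟩
      exact ⟨fun j => mul_nonneg (hapos j).le (vnn i j),
        fun j k hjk => hchain i j k hjk, fun j => hone i j⟩
    exact convexHull_min hsub hconv hx
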